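/- Weighted König–Egerváry theorem: Let C be an m × n matrix of blocks with positive integer row weights a₁,...,aₘ and column weights b₁,...,bₙ, and let Ω be a nonempty set of blocks (positions). Then the maximum total 'capacity' of a set of blocks in Ω forming a fractional matching respecting the weights (equivalently, the maximum size of a matching in the expanded bipartite graph where row i is split into aᵢ copies and column j into bⱼ copies, with edges corresponding to blocks of Ω) equals the minimum total weight of a set of rows and columns covering all blocks of Ω. -/

import Mathlib

/-- A matching in the expanded bipartite graph: edges join copies of rows and
copies of columns, an edge is allowed iff its (row, column) block lies in `Ω`,
and no two chosen edges share an endpoint. -/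
def IsExpandedMatching {m n : ℕ} (a : Fin m → ℕ+) (b : Fin n → ℕ+)
    (Ω : Set (Fin m × Fin n))
    (M : Finset ((Σ i : Fin m, Fin (a i)) × (Σ j : Fin n, Fin (b j)))) : Prop :=
  (∀ e ∈ M, (e.1.1, e.2.1) ∈ Ω) ∧
  (∀ e ∈ M, ∀ f ∈ M, e.1 = f.1 → e = f) ∧
  (∀ e ∈ M, ∀ f ∈ M, e.2 = f.2 → e = f)

/-- A cover of `Ω` by rows `R` and columns `S`. -/
def IsBlockCover {m n : ℕ} (Ω : Set (Fin m × Fin n))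
    (R : Finset (Fin m)) (S : Finset (Fin n)) : Prop :=
  ∀ q ∈ Ω, q.1 ∈ R ∨ q.2 ∈ S

open Finset in
/-- Expanded Hall theorem: if the weighted Hall condition holds for rows in `R`
with neighbourhoods `N`, then there is an injective assignment of all copies of
rows of `R` to copies of neighbouring columns. -/
lemma expanded_hall {I J : Type*} [Fintype I] [Fintype J] [DecidableEq I] [DecidableEq J]
    (a : I → ℕ+) (b : J → ℕ+) (N : I → Finset J) (R : Finset I)
    (hH : ∀ T ⊆ R, (∑ i ∈ T, (a i : ℕ)) ≤ ∑ j ∈ T.biUnion N, (b j : ℕ)) :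
    ∃ f : {v : Σ i : I, Fin (a i) // v.1 ∈ R} → Σ j : J, Fin (b j),
      Function.Injective f ∧ ∀ v, (f v).1 ∈ N v.1.1 := by
  classical
  set r : {v : Σ i : I, Fin (a i) // v.1 ∈ R} → Finset (Σ j : J, Fin (b j)) :=
    fun v => (N v.1.1).sigma fun _ => univ with hr
  have hall : ∀ (A : Finset {v : Σ i : I, Fin (a i) // v.1 ∈ R}),
      A.card ≤ (A.biUnion r).card := by
    intro A
    set T : Finset I := A.image fun v => v.1.1 with hT
    have hTR : T ⊆ R := by
      intro i hi
      obtain ⟨v, hv, rfl⟩ := mem_image.mp hi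
      exact v.2
    have h1 : A.card ≤ ∑ i ∈ T, (a i : ℕ) := by
      have : A.card ≤ (T.sigma fun i => (univ : Finset (Fin (a i)))).card := by
        apply Finset.card_le_card_of_injOn (fun v => v.1)
        · intro v hv
          simp only [mem_sigma, mem_univ, and_true]
          exact Finset.mem_coe.mpr (mem_sigma.mpr ⟨(mem_image (s := A) (f := fun v : {v : Σ i : I, Fin (a i) // v.1 ∈ R} => v.1.1)).mpr ⟨v, hv, rfl⟩, mem_univ _⟩)
        · intro x _ y _ h; exact Subtype.ext h
      simpa [Finset.card_sigma] using this
    have h2 : A.biUnion r = (T.biUnion N).sigma fun _ => (univ : Finset _) := by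
      ext x
      constructor
      · intro h
        obtain ⟨v, hv, hj⟩ := mem_biUnion.mp h
        simp only [hr] at hj
        exact mem_sigma.mpr ⟨mem_biUnion.mpr ⟨v.1.1, mem_image.mpr ⟨v, hv, rfl⟩,
          (mem_sigma.mp hj).1⟩, mem_univ _⟩
      · intro h
        obtain ⟨i, hi, hji⟩ := mem_biUnion.mp (mem_sigma.mp h).1
        obtain ⟨v, hv, rfl⟩ := mem_image.mp hi
        exact mem_biUnion.mpr ⟨v, hv, by simp only [hr]; exact mem_sigma.mpr ⟨hji, mem_univ _⟩⟩
    calc A.card ≤ ∑ i ∈ T, (a i : ℕ) := h1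
      _ ≤ ∑ j ∈ T.biUnion N, (b j : ℕ) := hH T hTR
      _ = (A.biUnion r).card := by rw [h2, Finset.card_sigma]; simp
  obtain ⟨f, hfinj, hfr⟩ := (Finset.all_card_le_biUnion_card_iff_exists_injective r).mp hall
  exact ⟨f, hfinj, fun v => by have := hfr v; simp only [hr] at this; exact (mem_sigma.mp this).1⟩

open Finset in
/-- Weak duality: any expanded matching is at most any cover weight. -/
lemma matching_le_cover {m n : ℕ} (a : Fin m → ℕ+) (b : Fin n → ℕ+)
    (Ω : Set (Fin m × Fin n))
    (M : Finset ((Σ i : Fin m, Fin (a i)) × (Σ j : Fin n, Fin (b j))))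
    (hM : IsExpandedMatching a b Ω M)
    (R : Finset (Fin m)) (S : Finset (Fin n)) (hRS : IsBlockCover Ω R S) :
    M.card ≤ (∑ i ∈ R, (a i : ℕ)) + ∑ j ∈ S, (b j : ℕ) := by
  classical
  have hcard : ((R.sigma fun i => (univ : Finset (Fin (a i)))).disjSum
      (S.sigma fun j => (univ : Finset (Fin (b j))))).card
      = (∑ i ∈ R, (a i : ℕ)) + ∑ j ∈ S, (b j : ℕ) := by
    simp [Finset.card_disjSum, Finset.card_sigma]
  rw [← hcard]
  apply Finset.card_le_card_of_injOn (fun e => if e.1.1 ∈ R then Sum.inl e.1 else Sum.inr e.2)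
  · intro e he
    by_cases h : e.1.1 ∈ R
    · simp [h, mem_sigma]
    · have h2 : e.2.1 ∈ S := (hRS _ (hM.1 e he)).resolve_left h
      simp [h, h2, mem_sigma]
  · intro e he f hf hef
    by_cases h1 : e.1.1 ∈ R <;> by_cases h2 : f.1.1 ∈ R <;>
      simp only [h1, h2, if_true, if_false, Sum.inl.injEq, Sum.inr.injEq,
        reduceCtorEq] at hef
    · exact hM.2.1 e he f hf hef
    · exact hM.2.2 e he f hf hef

/-- Counting copies: the subtype of copies of elements of `R` has size the
total weight of `R`. -/
lemma card_subtype_sigma {I : Type*} [Fintype I] [DecidableEq I] (a : I → ℕ+) (R : Finset I) :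
    Fintype.card {v : Σ i : I, Fin (a i) // v.1 ∈ R} = ∑ i ∈ R, (a i : ℕ) := by
  classical
  rw [Fintype.card_subtype]
  have h : (Finset.univ.filter fun v : Σ i : I, Fin (a i) => v.1 ∈ R)
      = R.sigma fun _ => Finset.univ := by
    ext v; simp [Finset.mem_sigma]
  rw [h, Finset.card_sigma]; simp

theorem weighted_koenig_egervary (m n : ℕ)
    (a : Fin m → ℕ+) (b : Fin n → ℕ+)
    (Ω : Set (Fin m × Fin n)) (hΩ : Ω.Nonempty) :
    ∃ w : ℕ,
      IsGreatest {k : ℕ | ∃ M, IsExpandedMatching a b Ω M ∧ M.card = k} w ∧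
      IsLeast {t : ℕ | ∃ R S, IsBlockCover Ω R S ∧
        (∑ i ∈ R, (a i : ℕ)) + (∑ j ∈ S, (b j : ℕ)) = t} w := by
  classical
  -- a minimum-weight cover (R, S)
  obtain ⟨p, hp, hmin⟩ := Finset.exists_min_image
    (Finset.univ.filter fun p : Finset (Fin m) × Finset (Fin n) => IsBlockCover Ω p.1 p.2)
    (fun p => (∑ i ∈ p.1, (a i : ℕ)) + ∑ j ∈ p.2, (b j : ℕ))
    ⟨(Finset.univ, ∅), by simp [IsBlockCover]⟩
  obtain ⟨R, S⟩ := p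
  have hRS : IsBlockCover Ω R S := (Finset.mem_filter.mp hp).2
  set t := (∑ i ∈ R, (a i : ℕ)) + ∑ j ∈ S, (b j : ℕ) with ht
  have hminle : ∀ R' S', IsBlockCover Ω R' S' →
      t ≤ (∑ i ∈ R', (a i : ℕ)) + ∑ j ∈ S', (b j : ℕ) := fun R' S' h =>
    hmin (R', S') (Finset.mem_filter.mpr ⟨Finset.mem_univ _, h⟩)
  -- weighted Hall condition on rows of R
  set NR : Fin m → Finset (Fin n) :=
    (fun i => Finset.univ.filter fun j => j ∉ S ∧ (i, j) ∈ Ω) with hNR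
  have hHr : ∀ T ⊆ R, (∑ i ∈ T, (a i : ℕ)) ≤ ∑ j ∈ T.biUnion NR, (b j : ℕ) := by
    intro T hT
    have hdisj : Disjoint S (T.biUnion NR) := by
      rw [Finset.disjoint_right]
      intro j hj
      obtain ⟨i, hi, hji⟩ := Finset.mem_biUnion.mp hj
      simp only [hNR, Finset.mem_filter] at hji
      exact hji.2.1
    have hcov : IsBlockCover Ω (R \ T) (S ∪ T.biUnion NR) := by
      rintro ⟨i, j⟩ hq
      by_cases hiT : i ∈ T
      · by_cases hjS : j ∈ S
        · exact Or.inr (Finset.mem_union_left _ hjS)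
        · refine Or.inr (Finset.mem_union_right _ (Finset.mem_biUnion.mpr ⟨i, hiT, ?_⟩))
          simp only [hNR, Finset.mem_filter]
          exact ⟨Finset.mem_univ _, hjS, hq⟩
      · rcases hRS _ hq with h | h
        · exact Or.inl (Finset.mem_sdiff.mpr ⟨h, hiT⟩)
        · exact Or.inr (Finset.mem_union_left _ h)
    have h1 := hminle _ _ hcov
    rw [Finset.sum_union hdisj] at h1
    have hsplit : (∑ i ∈ R \ T, (a i : ℕ)) + ∑ i ∈ T, (a i : ℕ) = ∑ i ∈ R, (a i : ℕ) :=
      Finset.sum_sdiff hT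
    omega
  -- weighted Hall condition on columns of S
  set NS : Fin n → Finset (Fin m) :=
    (fun j => Finset.univ.filter fun i => i ∉ R ∧ (i, j) ∈ Ω) with hNS
  have hHs : ∀ T ⊆ S, (∑ j ∈ T, (b j : ℕ)) ≤ ∑ i ∈ T.biUnion NS, (a i : ℕ) := by
    intro T hT
    have hdisj : Disjoint R (T.biUnion NS) := by
      rw [Finset.disjoint_right]
      intro i hi
      obtain ⟨j, hj, hij⟩ := Finset.mem_biUnion.mp hi
      simp only [hNS, Finset.mem_filter] at hij
      exact hij.2.1
    have hcov : IsBlockCover Ω (R ∪ T.biUnion NS) (S \ T) := by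
      rintro ⟨i, j⟩ hq
      by_cases hjT : j ∈ T
      · by_cases hiR : i ∈ R
        · exact Or.inl (Finset.mem_union_left _ hiR)
        · refine Or.inl (Finset.mem_union_right _ (Finset.mem_biUnion.mpr ⟨j, hjT, ?_⟩))
          simp only [hNS, Finset.mem_filter]
          exact ⟨Finset.mem_univ _, hiR, hq⟩
      · rcases hRS _ hq with h | h
        · exact Or.inl (Finset.mem_union_left _ h)
        · exact Or.inr (Finset.mem_sdiff.mpr ⟨h, hjT⟩)
    have h1 := hminle _ _ hcov
    rw [Finset.sum_union hdisj] at h1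
    have hsplit : (∑ j ∈ S \ T, (b j : ℕ)) + ∑ j ∈ T, (b j : ℕ) = ∑ j ∈ S, (b j : ℕ) :=
      Finset.sum_sdiff hT
    omega
  -- build a matching of size t via Hall
  obtain ⟨f, hfinj, hfN⟩ := expanded_hall a b NR R hHr
  obtain ⟨g, hginj, hgN⟩ := expanded_hall b a NS S hHs
  have hfS : ∀ v, (f v).1 ∉ S ∧ (v.1.1, (f v).1) ∈ Ω := by
    intro v
    have := hfN v
    simp only [hNR, Finset.mem_filter] at this
    exact this.2
  have hgR : ∀ w, (g w).1 ∉ R ∧ ((g w).1, w.1.1) ∈ Ω := by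
    intro w
    have := hgN w
    simp only [hNS, Finset.mem_filter] at this
    exact this.2
  set Mf : Finset ((Σ i : Fin m, Fin (a i)) × (Σ j : Fin n, Fin (b j))) :=
    Finset.univ.image (fun v : {v : Σ i : Fin m, Fin (a i) // v.1 ∈ R} => (v.1, f v)) with hMf
  set Mg : Finset ((Σ i : Fin m, Fin (a i)) × (Σ j : Fin n, Fin (b j))) :=
    Finset.univ.image (fun w : {w : Σ j : Fin n, Fin (b j) // w.1 ∈ S} => (g w, w.1)) with hMg
  have hMfmem : ∀ e ∈ Mf, ∃ v : {v : Σ i : Fin m, Fin (a i) // v.1 ∈ R}, e = (v.1, f v) := by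
    intro e he
    obtain ⟨v, _, hv⟩ := Finset.mem_image.mp he
    exact ⟨v, hv.symm⟩
  have hMgmem : ∀ e ∈ Mg, ∃ w : {w : Σ j : Fin n, Fin (b j) // w.1 ∈ S}, e = (g w, w.1) := by
    intro e he
    obtain ⟨w, _, hw⟩ := Finset.mem_image.mp he
    exact ⟨w, hw.symm⟩
  have hmatch : IsExpandedMatching a b Ω (Mf ∪ Mg) := by
    refine ⟨?_, ?_, ?_⟩
    · intro e he
      rcases Finset.mem_union.mp he with h | h
      · obtain ⟨v, rfl⟩ := hMfmem e h
        exact (hfS v).2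
      · obtain ⟨w, rfl⟩ := hMgmem e h
        exact (hgR w).2
    · intro e he e' he' h
      rcases Finset.mem_union.mp he with h1 | h1 <;> rcases Finset.mem_union.mp he' with h2 | h2
      · obtain ⟨v, rfl⟩ := hMfmem e h1
        obtain ⟨v', rfl⟩ := hMfmem e' h2
        have : v = v' := Subtype.ext h
        rw [this]
      · obtain ⟨v, rfl⟩ := hMfmem e h1
        obtain ⟨w, rfl⟩ := hMgmem e' h2
        have h' : (v : Σ i : Fin m, Fin (a i)) = g w := h
        exact absurd (h' ▸ v.2) (hgR w).1
      · obtain ⟨w, rfl⟩ := hMgmem e h1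
        obtain ⟨v, rfl⟩ := hMfmem e' h2
        have h' : g w = (v : Σ i : Fin m, Fin (a i)) := h
        exact absurd (h' ▸ (hgR w).1) (not_not_intro v.2)
      · obtain ⟨w, rfl⟩ := hMgmem e h1
        obtain ⟨w', rfl⟩ := hMgmem e' h2
        have : w = w' := hginj h
        rw [this]
    · intro e he e' he' h
      rcases Finset.mem_union.mp he with h1 | h1 <;> rcases Finset.mem_union.mp he' with h2 | h2
      · obtain ⟨v, rfl⟩ := hMfmem e h1
        obtain ⟨v', rfl⟩ := hMfmem e' h2
        have : v = v' := hfinj h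
        rw [this]
      · obtain ⟨v, rfl⟩ := hMfmem e h1
        obtain ⟨w, rfl⟩ := hMgmem e' h2
        have h' : f v = (w : Σ j : Fin n, Fin (b j)) := h
        exact absurd (h' ▸ (hfS v).1) (not_not_intro w.2)
      · obtain ⟨w, rfl⟩ := hMgmem e h1
        obtain ⟨v, rfl⟩ := hMfmem e' h2
        have h' : (w : Σ j : Fin n, Fin (b j)) = f v := h
        exact absurd (h' ▸ w.2) (hfS v).1
      · obtain ⟨w, rfl⟩ := hMgmem e h1
        obtain ⟨w', rfl⟩ := hMgmem e' h2
        have : w = w' := Subtype.ext h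
        rw [this]
  have hdisjfg : Disjoint Mf Mg := by
    rw [Finset.disjoint_left]
    intro e hef heg
    obtain ⟨v, rfl⟩ := hMfmem e hef
    obtain ⟨w, he⟩ := hMgmem _ heg
    have : (v : Σ i : Fin m, Fin (a i)) = g w := congrArg Prod.fst he
    exact (hgR w).1 (this ▸ v.2)
  have hcardMf : Mf.card = ∑ i ∈ R, (a i : ℕ) := by
    rw [hMf, Finset.card_image_of_injective _ (fun v v' hv => by
      exact Subtype.ext (congrArg Prod.fst hv)), Finset.card_univ]
    exact card_subtype_sigma a R
  have hcardMg : Mg.card = ∑ j ∈ S, (b j : ℕ) := by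
    rw [hMg, Finset.card_image_of_injective _ (fun w w' hw => by
      exact Subtype.ext (congrArg Prod.snd hw)), Finset.card_univ]
    exact card_subtype_sigma b S
  have hcardM : (Mf ∪ Mg).card = t := by
    rw [Finset.card_union_of_disjoint hdisjfg, hcardMf, hcardMg]
  refine ⟨t, ⟨⟨Mf ∪ Mg, hmatch, hcardM⟩, ?_⟩, ⟨R, S, hRS, rfl⟩, ?_⟩
  · rintro k ⟨M, hM, rfl⟩
    exact matching_le_cover a b Ω M hM R S hRS
  · rintro t' ⟨R', S', h, rfl⟩
    exact hminle R' S' h
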